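/- Let G be a finite group such that for every a ∈ G, the ratio o(aⁿ)/o(aⁿ²) lies in {1, 2, 3, 4, 6}, where n is a fixed positive integer. Then for all commuting u, g ∈ G and all integers m with gcd(m, |G|) = 1, |G_n(u, g)| = |G_n(u, gᵐ)|. -/

import Mathlib

lemma units_pm (d : ℕ) (hd : d ∈ ({1, 2, 3, 4, 6} : Set ℕ)) (m : ℤ)
    (h : Int.gcd m (d : ℤ) = 1) : (d : ℤ) ∣ m - 1 ∨ (d : ℤ) ∣ m + 1 := by
  have bez : (1 : ℤ) = m * Int.gcdA m d + d * Int.gcdB m d := by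
    rw [← Int.gcd_eq_gcd_ab]; exact_mod_cast h.symm
  have hz : (m : ZMod d) * (Int.gcdA m d : ZMod d) = 1 := by
    have := congrArg (fun z : ℤ => (z : ZMod d)) bez
    push_cast at this
    simpa using this.symm
  have key : (m : ZMod d) = 1 ∨ (m : ZMod d) = -1 := by
    simp only [Set.mem_insert_iff, Set.mem_singleton_iff] at hd
    obtain rfl | rfl | rfl | rfl | rfl := hd
    · exact (fun gen => gen _ _ hz) (by decide : ∀ x y : ZMod 1, x*y=1 → x=1 ∨ x=-1)
    · exact (fun gen => gen _ _ hz) (by decide : ∀ x y : ZMod 2, x*y=1 → x=1 ∨ x=-1)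
    · exact (fun gen => gen _ _ hz) (by decide : ∀ x y : ZMod 3, x*y=1 → x=1 ∨ x=-1)
    · exact (fun gen => gen _ _ hz) (by decide : ∀ x y : ZMod 4, x*y=1 → x=1 ∨ x=-1)
    · exact (fun gen => gen _ _ hz) (by decide : ∀ x y : ZMod 6, x*y=1 → x=1 ∨ x=-1)
  obtain h1 | h1 := key
  · left
    have : ((m - 1 : ℤ) : ZMod d) = 0 := by push_cast [h1]; ring
    exact (ZMod.intCast_zmod_eq_zero_iff_dvd _ d).mp this
  · right
    have : ((m + 1 : ℤ) : ZMod d) = 0 := by push_cast [h1]; ring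
    exact (ZMod.intCast_zmod_eq_zero_iff_dvd _ d).mp this

lemma shift_mem {G : Type*} [Group G] (n : ℕ) (u g : G) (hug : Commute u g) (t : ℤ) {a : G}
    (h1 : (a * u⁻¹) ^ n = a ^ n) (h2 : a ^ n = g) :
    ((a * g ^ t) * u⁻¹) ^ n = (a * g ^ t) ^ n ∧ (a * g ^ t) ^ n = g ^ ((1 : ℤ) + t * n) := by
  have hag : Commute a (g ^ t) := by
    rw [← h2]; exact ((Commute.refl a).pow_right n).zpow_right t
  have haug : Commute (a * u⁻¹) (g ^ t) := by
    rw [← h2, ← h1]; exact ((Commute.refl _).pow_right n).zpow_right t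
  have hgu : Commute (g ^ t) u⁻¹ := (hug.symm.zpow_left t).inv_right
  have hgtn : (g ^ t) ^ n = g ^ (t * (n : ℤ)) := by
    rw [← zpow_natCast (g ^ t) n, ← zpow_mul]
  have e2 : (a * g ^ t) ^ n = g ^ ((1 : ℤ) + t * n) := by
    rw [hag.mul_pow, h2, hgtn, zpow_add, zpow_one]
  refine ⟨?_, e2⟩
  have rearr : a * g ^ t * u⁻¹ = (a * u⁻¹) * g ^ t := by
    rw [mul_assoc, hgu.eq, ← mul_assoc]
  rw [rearr, haug.mul_pow, h1, h2, hgtn, e2, zpow_add, zpow_one]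

lemma flip_mem {G : Type*} [Group G] (n : ℕ) (u : G) {h : G} (hug : Commute u h) {b : G}
    (h1 : (b * u⁻¹) ^ n = b ^ n) (h2 : b ^ n = h) :
    ((u * b⁻¹) * u⁻¹) ^ n = (u * b⁻¹) ^ n ∧ (u * b⁻¹) ^ n = h⁻¹ := by
  have e1 : (u * b⁻¹) ^ n = h⁻¹ := by
    have : u * b⁻¹ = (b * u⁻¹)⁻¹ := by group
    rw [this, inv_pow, h1, h2]
  refine ⟨?_, e1⟩
  rw [conj_pow, inv_pow, h2, e1, hug.inv_right.eq, mul_assoc]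
  simp

lemma key_le {G : Type*} [Group G] [Finite G] (n : ℕ)
    (hyp : ∀ a : G, orderOf (a ^ n) / orderOf (a ^ (n ^ 2)) ∈ ({1, 2, 3, 4, 6} : Set ℕ))
    (u g : G) (hc : u * g = g * u) (m : ℤ) (hm : Int.gcd m (Nat.card G) = 1) :
    Nat.card {a : G | (a * u⁻¹) ^ n = a ^ n ∧ a ^ n = g} ≤
      Nat.card {a : G | (a * u⁻¹) ^ n = a ^ n ∧ a ^ n = g ^ m} := by
  set S : Set G := {a : G | (a * u⁻¹) ^ n = a ^ n ∧ a ^ n = g} with hSdef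
  set T : Set G := {a : G | (a * u⁻¹) ^ n = a ^ n ∧ a ^ n = g ^ m} with hTdef
  rcases S.eq_empty_or_nonempty with he | ⟨a₀, ha1, ha2⟩
  · rw [he]; simp
  have hug : Commute u g := hc
  set r := orderOf g with hrdef
  have hr0 : r ≠ 0 := (orderOf_pos g).ne'
  set d := Nat.gcd r n with hddef
  have hd : d ∈ ({1, 2, 3, 4, 6} : Set ℕ) := by
    have hh := hyp a₀
    have e1 : a₀ ^ (n ^ 2) = g ^ n := by rw [pow_two, pow_mul, ha2]
    rwa [ha2, e1, orderOf_pow, ← hrdef, ← hddef,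
      Nat.div_div_self (Nat.gcd_dvd_left r n) hr0] at hh
  have hmd : Int.gcd m (d : ℤ) = 1 := by
    have hdvd : Int.gcd m (d : ℤ) ∣ Int.gcd m (Nat.card G) := by
      apply Nat.dvd_gcd (Nat.gcd_dvd_left _ _)
      calc (Int.gcd m (d:ℤ)) ∣ (d:ℤ).natAbs := Nat.gcd_dvd_right _ _
        _ = d := Int.natAbs_natCast d
        _ ∣ r := Nat.gcd_dvd_left r n
        _ ∣ Nat.card G := orderOf_dvd_natCard g
    rw [hm] at hdvd; exact Nat.dvd_one.mp hdvd
  have bez : (d : ℤ) = r * Nat.gcdA r n + n * Nat.gcdB r n := Nat.gcd_eq_gcd_ab r n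
  obtain hpm | hpm := units_pm d hd m hmd
  · -- m ≡ 1 mod d : map a ↦ a * g ^ t
    obtain ⟨s, hs⟩ := hpm
    set t : ℤ := Nat.gcdB r n * s with htdef
    have hrt : (r : ℤ) ∣ m - (1 + t * n) := by
      refine ⟨Nat.gcdA r n * s, ?_⟩
      calc m - (1 + t * n) = (m - 1) - t * n := by ring
        _ = (d : ℤ) * s - t * n := by rw [hs]
        _ = ((r : ℤ) * Nat.gcdA r n + n * Nat.gcdB r n) * s - (Nat.gcdB r n * s) * n := by
            rw [← bez, htdef]
        _ = (r : ℤ) * (Nat.gcdA r n * s) := by ring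
    have hgm : g ^ m = g ^ ((1 : ℤ) + t * n) := by
      have h1 : g ^ (m - (1 + t * n)) = 1 := orderOf_dvd_iff_zpow_eq_one.mp hrt
      rw [zpow_sub] at h1
      exact mul_inv_eq_one.mp h1
    have maps : Set.MapsTo (fun a => a * g ^ t) S T := by
      rintro a ⟨h1, h2⟩
      obtain ⟨e1, e2⟩ := shift_mem n u g hug t h1 h2
      exact ⟨e1, by rw [e2, hgm]⟩
    have inj : Set.InjOn (fun a => a * g ^ t) S := fun a _ b _ h => mul_right_cancel h
    calc Nat.card S = Nat.card ((fun a => a * g ^ t) '' S) := (Nat.card_image_of_injOn inj).symm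
      _ ≤ Nat.card T := Nat.card_mono T.toFinite maps.image_subset
  · -- m ≡ -1 mod d : map a ↦ u * (a * g ^ t)⁻¹
    have hs' : (d : ℤ) ∣ (-m) - 1 := by
      obtain ⟨s, hs⟩ := hpm; exact ⟨-s, by linarith⟩
    obtain ⟨s, hs⟩ := hs'
    set t : ℤ := Nat.gcdB r n * s with htdef
    have hrt : (r : ℤ) ∣ (-m) - (1 + t * n) := by
      refine ⟨Nat.gcdA r n * s, ?_⟩
      calc (-m) - (1 + t * n) = ((-m) - 1) - t * n := by ring
        _ = (d : ℤ) * s - t * n := by rw [hs]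
        _ = ((r : ℤ) * Nat.gcdA r n + n * Nat.gcdB r n) * s - (Nat.gcdB r n * s) * n := by
            rw [← bez, htdef]
        _ = (r : ℤ) * (Nat.gcdA r n * s) := by ring
    have hgm : (g ^ ((1 : ℤ) + t * n))⁻¹ = g ^ m := by
      have h1 : g ^ ((-m) - (1 + t * n)) = 1 := orderOf_dvd_iff_zpow_eq_one.mp hrt
      rw [zpow_sub] at h1
      have := mul_inv_eq_one.mp h1
      rw [← this, zpow_neg, inv_inv]
    have maps : Set.MapsTo (fun a => u * (a * g ^ t)⁻¹) S T := by
      rintro a ⟨h1, h2⟩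
      obtain ⟨e1, e2⟩ := shift_mem n u g hug t h1 h2
      obtain ⟨f1, f2⟩ := flip_mem n u (hug.zpow_right ((1 : ℤ) + t * n)) e1 e2
      exact ⟨f1, by rw [f2, hgm]⟩
    have inj : Set.InjOn (fun a => u * (a * g ^ t)⁻¹) S := by
      intro a _ b _ h
      simp only at h
      have := inv_injective (mul_left_cancel h)
      exact mul_right_cancel this
    calc Nat.card S = Nat.card ((fun a => u * (a * g ^ t)⁻¹) '' S) :=
          (Nat.card_image_of_injOn inj).symm
      _ ≤ Nat.card T := Nat.card_mono T.toFinite maps.image_subset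

theorem stmt_11 {G : Type*} [Group G] [Finite G] (n : ℕ) (hn : 0 < n)
    (hyp : ∀ a : G, orderOf (a ^ n) / orderOf (a ^ (n ^ 2)) ∈ ({1, 2, 3, 4, 6} : Set ℕ)) :
    ∀ u g : G, u * g = g * u → ∀ m : ℤ, Int.gcd m (Nat.card G) = 1 →
      Nat.card {a : G | (a * u⁻¹) ^ n = a ^ n ∧ a ^ n = g} =
        Nat.card {a : G | (a * u⁻¹) ^ n = a ^ n ∧ a ^ n = g ^ m} := by
  intro u g hc m hm
  refine le_antisymm (key_le n hyp u g hc m hm) ?_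
  have hcop : IsCoprime m ((Nat.card G : ℤ)) := Int.isCoprime_iff_gcd_eq_one.mpr hm
  obtain ⟨a, b, hab⟩ := hcop
  have hm' : Int.gcd a (Nat.card G) = 1 :=
    Int.isCoprime_iff_gcd_eq_one.mp ⟨m, b, by linarith⟩
  have hc' : u * g ^ m = g ^ m * u := (Commute.zpow_right (hc : Commute u g) m).eq
  have key := key_le n hyp u (g ^ m) hc' a hm'
  have hgma : (g ^ m) ^ a = g := by
    rw [← zpow_mul]
    have e : g ^ (m * a) = g ^ ((1 : ℤ) - (Nat.card G : ℤ) * b) := by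
      congr 1; linarith
    rw [e, zpow_sub, zpow_one, zpow_mul, zpow_natCast, pow_card_eq_one']
    simp
  rwa [hgma] at key
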